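/- Let M be a cancellative additive commutative monoid equipped with an additive monoid homomorphism deg : M → ℕ such that for every k ∈ ℕ the set {m ∈ M : deg m = k} is finite. Let T be a type and φ : T → M a map all of whose fibers are finite. For D, m ∈ M write D ≼ m if there exists c ∈ M with D + c = m. Then all the sets appearing below are finite and for every k ∈ ℕ one has the convolution identity Σ_{m ∈ M, deg m = k} #{t ∈ T : φ(t) ≼ m} = Σ_{j + l = k} #{c ∈ M : deg c = j} · #{t ∈ T : deg(φ(t)) = l}. Equivalently, as formal power series in ℤ⟦T⟧, (Σ_{c ∈ M} T^{deg c}) · (Σ_{D ∈ M} H_D T^{deg D}) = Σ_{E ∈ M} S_E T^{deg E}, where H_D := #{t : φ(t) = D} and S_E := #{t : φ(t) ≼ E}. -/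

import Mathlib

/-- Combinatorial core of the reduction of the height zeta function:
for a cancellative additive monoid `M` with a degree homomorphism having finite
fibers, and a map `φ : T → M` with finite fibers, all relevant sets are finite
and one has the convolution identity
`∑_{deg m = k} #{t : φ t ≼ m} = ∑_{j+l=k} #{c : deg c = j} * #{t : deg (φ t) = l}`,
equivalently `(∑_c T^{deg c}) * (∑_D H_D T^{deg D}) = ∑_E S_E T^{deg E}` in `ℤ⟦T⟧`. -/
theorem height_zeta_convolution
    {M : Type*} [AddCommMonoid M] [IsCancelAdd M]
    (deg : M →+ ℕ) (hdeg : ∀ k : ℕ, {m : M | deg m = k}.Finite)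
    {T : Type*} (φ : T → M) (hφ : ∀ D : M, {t : T | φ t = D}.Finite) :
    (∀ m : M, {t : T | ∃ c : M, φ t + c = m}.Finite) ∧
    (∀ l : ℕ, {t : T | deg (φ t) = l}.Finite) ∧
    (∀ k : ℕ,
      ∑ m ∈ (hdeg k).toFinset, {t : T | ∃ c : M, φ t + c = m}.ncard
        = ∑ jl ∈ Finset.HasAntidiagonal.antidiagonal k,
            {c : M | deg c = jl.1}.ncard * {t : T | deg (φ t) = jl.2}.ncard) ∧
    (PowerSeries.mk (fun j : ℕ => ({c : M | deg c = j}.ncard : ℤ)))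
        * (PowerSeries.mk (fun k : ℕ =>
            ∑ D ∈ (hdeg k).toFinset, ({t : T | φ t = D}.ncard : ℤ)))
      = PowerSeries.mk (fun k : ℕ =>
            ∑ E ∈ (hdeg k).toFinset, ({t : T | ∃ c : M, φ t + c = E}.ncard : ℤ)) := by
  classical
  -- fibers of `deg ∘ φ` are finite
  have hfib : ∀ l : ℕ, {t : T | deg (φ t) = l}.Finite := by
    intro l
    refine Set.Finite.subset ((hdeg l).biUnion fun D _ => hφ D) ?_
    intro t ht
    exact Set.mem_biUnion ht rfl
  -- sets of points with bounded polar divisor are finite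
  have hpre : ∀ m : M, {t : T | ∃ c : M, φ t + c = m}.Finite := by
    intro m
    refine Set.Finite.subset
      (Set.Finite.biUnion (Set.finite_Iic (deg m)) fun l _ => hfib l) ?_
    rintro t ⟨c, hc⟩
    refine Set.mem_biUnion ?_ rfl
    have h : deg (φ t) + deg c = deg m := by rw [← map_add, hc]
    exact Set.mem_Iic.mpr (Nat.le.intro h)
  -- the set of pairs of total degree `k` is finite
  have hP : ∀ k : ℕ, {p : T × M | deg (φ p.1) + deg p.2 = k}.Finite := by
    intro k
    refine Set.Finite.subset (Set.Finite.biUnion (Finset.HasAntidiagonal.antidiagonal k).finite_toSet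
      (fun jl _ => (hfib jl.2).prod (hdeg jl.1))) ?_
    intro p hp
    simp only [Set.mem_iUnion]
    refine ⟨(deg p.2, deg (φ p.1)), Finset.mem_coe.mpr (Finset.HasAntidiagonal.mem_antidiagonal.mpr ?_),
      rfl, rfl⟩
    have : deg (φ p.1) + deg p.2 = k := hp
    omega
  -- summing fiber counts over divisors of degree `l`
  have hsumfib : ∀ l : ℕ, {t : T | deg (φ t) = l}.ncard
      = ∑ D ∈ (hdeg l).toFinset, {t : T | φ t = D}.ncard := by
    intro l
    rw [Set.ncard_eq_toFinset_card _ (hfib l),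
      Finset.card_eq_sum_card_fiberwise (f := φ) (t := (hdeg l).toFinset)
        (fun t ht => by
          simp only [Finset.mem_coe, Set.Finite.mem_toFinset, Set.mem_setOf_eq] at ht ⊢
          exact ht)]
    refine Finset.sum_congr rfl fun D hD => ?_
    rw [Set.ncard_eq_toFinset_card _ (hφ D)]
    congr 1
    ext t
    simp only [Finset.mem_filter, Set.Finite.mem_toFinset, Set.mem_setOf_eq] at hD ⊢
    exact ⟨fun h => h.2, fun h => ⟨by rw [h, hD], h⟩⟩
  -- the main convolution identity over ℕ
  have key : ∀ k : ℕ,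
      ∑ m ∈ (hdeg k).toFinset, {t : T | ∃ c : M, φ t + c = m}.ncard
        = ∑ jl ∈ Finset.HasAntidiagonal.antidiagonal k,
            {c : M | deg c = jl.1}.ncard * {t : T | deg (φ t) = jl.2}.ncard := by
    intro k
    set s := (hP k).toFinset with hs
    have h1 : ∑ m ∈ (hdeg k).toFinset, {t : T | ∃ c : M, φ t + c = m}.ncard = s.card := by
      rw [Finset.card_eq_sum_card_fiberwise
        (f := fun p : T × M => φ p.1 + p.2) (t := (hdeg k).toFinset)
        (fun p hp => by
          have h : deg (φ p.1) + deg p.2 = k := by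
            simpa only [Finset.mem_coe, hs, Set.Finite.mem_toFinset, Set.mem_setOf_eq] using hp
          simp only [Finset.mem_coe, Set.Finite.mem_toFinset, Set.mem_setOf_eq, map_add]
          exact h)]
      refine Finset.sum_congr rfl fun m hm => ?_
      have hm' : deg m = k := by
        simpa only [Set.Finite.mem_toFinset, Set.mem_setOf_eq] using hm
      have himg : (s.filter (fun p => φ p.1 + p.2 = m)).image Prod.fst
          = (hpre m).toFinset := by
        ext t
        simp only [Finset.mem_image, Finset.mem_filter, hs, Set.Finite.mem_toFinset,
          Set.mem_setOf_eq]
        constructor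
        · rintro ⟨p, ⟨-, hpm⟩, rfl⟩; exact ⟨p.2, hpm⟩
        · rintro ⟨c, hc⟩
          exact ⟨(t, c), ⟨by rw [← map_add, hc, hm'], hc⟩, rfl⟩
      have hinj : Set.InjOn (Prod.fst : T × M → T)
          ((s.filter (fun p => φ p.1 + p.2 = m) : Finset (T × M)) : Set (T × M)) := by
        intro p hp q hq hfst
        simp only [Finset.coe_filter, Set.mem_setOf_eq] at hp hq
        have h : φ p.1 + p.2 = φ p.1 + q.2 := by
          rw [hp.2, hfst]; exact hq.2.symm
        exact Prod.ext hfst (add_left_cancel h)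
      rw [Set.ncard_eq_toFinset_card _ (hpre m), ← himg, Finset.card_image_of_injOn hinj]
    have h2 : s.card = ∑ jl ∈ Finset.HasAntidiagonal.antidiagonal k,
        {c : M | deg c = jl.1}.ncard * {t : T | deg (φ t) = jl.2}.ncard := by
      rw [Finset.card_eq_sum_card_fiberwise
        (f := fun p : T × M => (deg p.2, deg (φ p.1))) (t := Finset.HasAntidiagonal.antidiagonal k)
        (fun p hp => by
          have h : deg (φ p.1) + deg p.2 = k := by
            simpa only [Finset.mem_coe, hs, Set.Finite.mem_toFinset, Set.mem_setOf_eq] using hp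
          rw [Finset.mem_coe, Finset.HasAntidiagonal.mem_antidiagonal]
          show deg p.2 + deg (φ p.1) = k
          omega)]
      refine Finset.sum_congr rfl fun jl hjl => ?_
      rw [Finset.HasAntidiagonal.mem_antidiagonal] at hjl
      have hfil : s.filter (fun p => (deg p.2, deg (φ p.1)) = jl)
          = (hfib jl.2).toFinset ×ˢ (hdeg jl.1).toFinset := by
        ext p
        simp only [Finset.mem_filter, hs, Set.Finite.mem_toFinset, Set.mem_setOf_eq,
          Finset.mem_product, Prod.ext_iff]
        constructor
        · rintro ⟨-, h1', h2'⟩; exact ⟨h2', h1'⟩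
        · rintro ⟨h1', h2'⟩; exact ⟨by omega, h2', h1'⟩
      rw [hfil, Finset.card_product, Set.ncard_eq_toFinset_card _ (hdeg jl.1),
        Set.ncard_eq_toFinset_card _ (hfib jl.2), mul_comm]
    rw [h1, h2]
  refine ⟨hpre, hfib, key, ?_⟩
  -- the power-series identity
  ext k
  rw [PowerSeries.coeff_mul]
  simp only [PowerSeries.coeff_mk]
  have h4 : ∀ l : ℕ, (∑ D ∈ (hdeg l).toFinset, ({t : T | φ t = D}.ncard : ℤ))
      = ({t : T | deg (φ t) = l}.ncard : ℤ) := by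
    intro l
    rw [hsumfib l]
    push_cast
    rfl
  calc ∑ jl ∈ Finset.HasAntidiagonal.antidiagonal k, ({c : M | deg c = jl.1}.ncard : ℤ)
          * ∑ D ∈ (hdeg jl.2).toFinset, ({t : T | φ t = D}.ncard : ℤ)
      = ∑ jl ∈ Finset.HasAntidiagonal.antidiagonal k,
          (({c : M | deg c = jl.1}.ncard * {t : T | deg (φ t) = jl.2}.ncard : ℕ) : ℤ) := by
        refine Finset.sum_congr rfl fun jl _ => ?_
        rw [h4, Nat.cast_mul]
    _ = ((∑ jl ∈ Finset.HasAntidiagonal.antidiagonal k,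
          {c : M | deg c = jl.1}.ncard * {t : T | deg (φ t) = jl.2}.ncard : ℕ) : ℤ) := by
        rw [Nat.cast_sum]
    _ = ((∑ E ∈ (hdeg k).toFinset, {t : T | ∃ c : M, φ t + c = E}.ncard : ℕ) : ℤ) := by
        rw [← key k]
    _ = ∑ E ∈ (hdeg k).toFinset, ({t : T | ∃ c : M, φ t + c = E}.ncard : ℤ) := by
        rw [Nat.cast_sum]
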